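/- arXiv:2305.02295 — 2 statements merged into one kernel-verified Lean document; each statement's English description precedes it below -/
import Mathlib

section
/- Consider initial configurations of consensus given by input assignments I : Process → Bool over a finite nonempty set of processes. Assume validity: if all inputs are b then the failure-free decision is b. Assume the indistinguishability axiom: the p-silent decision from two input assignments agreeing outside p is the same. Then there exists an input assignment I and a process p such that the failure-free decision from I differs from the p-silent decision from I. -/
/-- Lemma 2: existence of a p-dependent initial configuration. Given validity and
the indistinguishability of p-silent decisions from input assignments agreeing
outside p, there is an input assignment I and process p such that the failure-free
decision from I differs from the p-silent decision from I. -/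
theorem exists_dependent_initial (n : ℕ) (hn : 1 ≤ n)
    (ff : (Fin n → Bool) → Bool) (sil : (Fin n → Bool) → Fin n → Bool)
    (hvalid : ∀ b : Bool, ff (fun _ => b) = b)
    (hindist : ∀ (I I' : Fin n → Bool) (p : Fin n),
      (∀ q, q ≠ p → I q = I' q) → sil I p = sil I' p) :
    ∃ (I : Fin n → Bool) (p : Fin n), ff I ≠ sil I p := by
  by_contra h
  push_neg at h
  set J : ℕ → Fin n → Bool := fun k q => decide (q.val < k) with hJ
  have key : ∀ k ≤ n, ff (J k) = false := by
    intro k hk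
    induction k with
    | zero =>
      have : J 0 = fun _ => false := by
        funext q; simp [hJ]
      rw [this, hvalid]
    | succ m ih =>
      have hm : m < n := hk
      have hIm := ih (le_of_lt hm)
      set p : Fin n := ⟨m, hm⟩ with hp
      have hagree : ∀ q, q ≠ p → J m q = J (m+1) q := by
        intro q hq
        have : q.val ≠ m := by
          intro hqv; exact hq (Fin.ext hqv)
        simp only [hJ]
        by_cases hlt : q.val < m
        · simp [hlt, Nat.lt_succ_of_lt hlt]
        · have : ¬ q.val < m + 1 := by omega
          simp [hlt, this]
      calc ff (J (m+1)) = sil (J (m+1)) p := h _ _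
        _ = sil (J m) p := (hindist _ _ p hagree).symm
        _ = ff (J m) := (h _ _).symm
        _ = false := hIm
  have hn' := key n le_rfl
  have : J n = fun _ => true := by
    funext q; simp [hJ, q.isLt]
  rw [this, hvalid] at hn'
  simp at hn'
end

section
/- Let n > 2. Model one get-core simulated round in the fail-to-receive system: in each of three phases every process receives from at least n−2 of the other n−1 processes. Formally, let R1, R2, R3 : Fin n → Finset (Fin n) with R_i(p) ⊆ univ \ {p} and |R_i(p)| ≥ n − 2 for all p and i. Define knowledge after phase 1 as K1(p) = R1(p) ∪ {p}; after phase 2, K2(p) = ⋃_{q ∈ R2(p) ∪ {p}} K1(q); after phase 3, K3(p) = ⋃_{q ∈ R3(p) ∪ {p}} K2(q). Then there exists a set S of at least n − 1 processes such that S ⊆ K3(p) for every process p. -/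
open Finset

/-- Get-core lemma: after three phases in the fail-to-receive model (each process
hears from at least n - 2 of the other n - 1 processes each phase), there is a set
S of at least n - 1 processes whose phase-1 values are known to everyone. -/
theorem get_core (n : ℕ) (hn : 2 < n) (R1 R2 R3 : Fin n → Finset (Fin n))
    (hsub1 : ∀ p, R1 p ⊆ univ \ {p}) (hcard1 : ∀ p, n - 2 ≤ (R1 p).card)
    (hsub2 : ∀ p, R2 p ⊆ univ \ {p}) (hcard2 : ∀ p, n - 2 ≤ (R2 p).card)
    (hsub3 : ∀ p, R3 p ⊆ univ \ {p}) (hcard3 : ∀ p, n - 2 ≤ (R3 p).card) :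
    ∃ S : Finset (Fin n), n - 1 ≤ S.card ∧
      ∀ p : Fin n, S ⊆ (insert p (R3 p)).biUnion
        (fun q => (insert q (R2 q)).biUnion (fun r => insert r (R1 r))) := by
  have hself : ∀ (R : Fin n → Finset (Fin n)),
      (∀ p, R p ⊆ univ \ {p}) → ∀ q, q ∉ R q := by
    intro R hR q hq
    have := hR q hq
    simp at this
  have hfin : Fintype.card (Fin n) = n := Fintype.card_fin n
  set f : Fin n → Finset (Fin n) := fun q => insert q (R2 q) with hf
  have hfcard : ∀ q, n - 1 ≤ (f q).card := by
    intro q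
    rw [hf]
    rw [card_insert_of_notMem (hself R2 hsub2 q)]
    have := hcard2 q
    omega
  -- double counting to find l
  have hsum : ∑ l : Fin n, (univ.filter (fun q => l ∈ f q)).card
      = ∑ q : Fin n, (f q).card := by
    simp_rw [card_filter]
    rw [Finset.sum_comm]
    congr 1
    ext q
    rw [Finset.sum_boole]
    simp [Finset.filter_mem_eq_inter]
  obtain ⟨l, hl⟩ : ∃ l : Fin n, n - 1 ≤ (univ.filter (fun q => l ∈ f q)).card := by
    by_contra h
    push_neg at h
    have h1 : ∑ l : Fin n, (univ.filter (fun q => l ∈ f q)).card ≤ n * (n - 2) := by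
      calc ∑ l : Fin n, (univ.filter (fun q => l ∈ f q)).card
          ≤ ∑ _l : Fin n, (n - 2) := Finset.sum_le_sum (fun l _ => by have := h l; omega)
        _ = n * (n - 2) := by simp [mul_comm]
    have h2 : n * (n - 1) ≤ ∑ q : Fin n, (f q).card := by
      calc n * (n - 1) = ∑ _q : Fin n, (n - 1) := by simp [mul_comm]
        _ ≤ ∑ q : Fin n, (f q).card := Finset.sum_le_sum (fun q _ => hfcard q)
    rw [hsum] at h1
    have : n * (n - 1) ≤ n * (n - 2) := le_trans h2 h1
    have := Nat.le_of_mul_le_mul_left this (by omega : 0 < n)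
    omega
  set T : Finset (Fin n) := univ.filter (fun q => l ∈ f q) with hT
  refine ⟨insert l (R1 l), ?_, ?_⟩
  · rw [card_insert_of_notMem (hself R1 hsub1 l)]
    have := hcard1 l
    omega
  · intro p
    -- find q ∈ insert p (R3 p) ∩ T
    have hA : n - 1 ≤ (insert p (R3 p)).card := by
      rw [card_insert_of_notMem (hself R3 hsub3 p)]
      have := hcard3 p
      omega
    have hint : ((insert p (R3 p)) ∩ T).Nonempty := by
      rw [← Finset.card_pos]
      have hu : ((insert p (R3 p)) ∪ T).card ≤ n := by
        have := Finset.card_le_univ ((insert p (R3 p)) ∪ T)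
        simpa [hfin] using this
      have := Finset.card_inter_add_card_union (insert p (R3 p)) T
      omega
    obtain ⟨q, hq⟩ := hint
    rw [Finset.mem_inter] at hq
    obtain ⟨hq3, hqT⟩ := hq
    rw [hT, Finset.mem_filter] at hqT
    intro x hx
    rw [Finset.mem_biUnion]
    refine ⟨q, hq3, ?_⟩
    rw [Finset.mem_biUnion]
    exact ⟨l, hqT.2, hx⟩
end
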